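/- Let 0 < λ < μ and ν > 0 be real numbers and set r = ν/λ. Define for each natural number i: π_i = binom(r+i−1, i) · (λ/μ)^i · (1 − λ/μ)^r, where binom(x,k) = (∏_{m=0}^{k−1}(x−m))/k! is the generalized binomial coefficient (so binom(r+i−1, i) = r(r+1)⋯(r+i−1)/i!) and (1−λ/μ)^r is the real power of a positive base. Then: (i) π_i > 0 for all i; (ii) the family (π_i) sums to 1 (HasSum π 1); and (iii) the detailed balance equations π_i·(λi + ν) = μ·(i+1)·π_{i+1} hold for all natural numbers i. -/

import Mathlib

open Real

/-- Generalized binomial coefficient `binom(x, k) = x(x-1)⋯(x-k+1)/k!` for real `x`. -/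
noncomputable def genBinom (x : ℝ) (k : ℕ) : ℝ :=
  (∏ m ∈ Finset.range k, (x - m)) / (Nat.factorial k)

lemma genBinom_succ (r : ℝ) (i : ℕ) :
    genBinom (r + ((i + 1 : ℕ) : ℝ) - 1) (i + 1)
      = ((r + i) / (i + 1)) * genBinom (r + (i : ℝ) - 1) i := by
  unfold genBinom
  rw [Finset.prod_range_succ', Nat.factorial_succ]
  have h1 : ∀ m ∈ Finset.range i,
      (r + ((i + 1 : ℕ) : ℝ) - 1 - ((m + 1 : ℕ) : ℝ)) = r + (i : ℝ) - 1 - m := by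
    intro m _; push_cast; ring
  rw [Finset.prod_congr rfl h1]
  have h2 : (r + ((i + 1 : ℕ) : ℝ) - 1 - ((0 : ℕ) : ℝ)) = r + i := by push_cast; ring
  rw [h2]
  have h3 : ((i + 1) * Nat.factorial i : ℕ) ≠ 0 := by positivity
  have h4 : ((Nat.factorial i : ℝ)) ≠ 0 := by positivity
  have h5 : ((i : ℝ) + 1) ≠ 0 := by positivity
  push_cast
  field_simp

lemma genBinom_pos {r : ℝ} (hr : 0 < r) : ∀ i : ℕ, 0 < genBinom (r + (i : ℝ) - 1) i := by
  intro i
  induction i with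
  | zero => simp [genBinom]
  | succ n ih =>
      rw [genBinom_succ]
      have : 0 < (r + n) / (n + 1) := by positivity
      positivity

lemma tendsto_aux (c : ℝ) :
    Filter.Tendsto (fun n : ℕ => (c + n) / ((n : ℝ) + 1)) Filter.atTop (nhds 1) := by
  have h0 : Filter.Tendsto (fun n : ℕ => ((n : ℝ) + 1)) Filter.atTop Filter.atTop :=
    Filter.tendsto_atTop_add_const_right _ 1 tendsto_natCast_atTop_atTop
  have h1 : Filter.Tendsto (fun n : ℕ => (c - 1) / ((n : ℝ) + 1)) Filter.atTop (nhds 0) :=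
    Filter.Tendsto.div_atTop tendsto_const_nhds h0
  have h2 : (fun n : ℕ => (c + n) / ((n : ℝ) + 1))
      = fun n : ℕ => 1 + (c - 1) / ((n : ℝ) + 1) := by
    funext n
    have hn : ((n : ℝ) + 1) ≠ 0 := by positivity
    field_simp
    ring
  rw [h2]
  simpa using tendsto_const_nhds.add h1

lemma summable_aux {a : ℕ → ℝ} (ha : ∀ n, 0 < a n)
    (hrat : Filter.Tendsto (fun n => a (n + 1) / a n) Filter.atTop (nhds 1))
    {t : ℝ} (ht0 : 0 < t) (ht1 : t < 1) : Summable fun n => a n * t ^ n := by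
  apply summable_of_ratio_test_tendsto_lt_one ht1
  · refine Filter.Eventually.of_forall fun n => ?_
    have h1 := ha n
    positivity
  · have h : (fun n => ‖a (n + 1) * t ^ (n + 1)‖ / ‖a n * t ^ n‖)
        = fun n => (a (n + 1) / a n) * t := by
      funext n
      have hp1 := ha n
      have hp2 := ha (n + 1)
      rw [Real.norm_eq_abs, Real.norm_eq_abs, abs_of_pos (by positivity),
        abs_of_pos (by positivity), pow_succ]
      have h1 : a n ≠ 0 := (ha n).ne'
      have h2 : (t : ℝ) ^ n ≠ 0 := by positivity
      field_simp
    rw [h]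
    simpa using hrat.mul_const t

/-- The claimed invariant distribution `π_i = binom(r+i-1, i) (λ/μ)^i (1-λ/μ)^r` (with
`r = ν/λ`) of the linear birth-death process with immigration in the positive recurrent
regime: it is positive, sums to `1`, and satisfies the detailed balance equations
`π_i (λi + ν) = μ (i+1) π_{i+1}`. -/
theorem stmt_17 (lam mu nu : ℝ) (hlam : 0 < lam) (hlm : lam < mu) (hnu : 0 < nu)
    (r : ℝ) (hr : r = nu / lam) (pi : ℕ → ℝ)
    (hpi : ∀ i : ℕ, pi i = genBinom (r + (i : ℝ) - 1) i * (lam / mu) ^ i * (1 - lam / mu) ^ r) :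
    (∀ i : ℕ, 0 < pi i) ∧
    HasSum pi 1 ∧
    (∀ i : ℕ, pi i * (lam * (i : ℝ) + nu) = mu * ((i : ℝ) + 1) * pi (i + 1)) := by
  have hmu : 0 < mu := hlam.trans hlm
  set x : ℝ := lam / mu with hxdef
  have hx0 : 0 < x := div_pos hlam hmu
  have hx1 : x < 1 := (div_lt_one hmu).2 hlm
  have hr0 : 0 < r := hr ▸ div_pos hnu hlam
  set a : ℕ → ℝ := fun i => genBinom (r + (i : ℝ) - 1) i with ha_def
  have hapos : ∀ n, 0 < a n := genBinom_pos hr0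
  have harec : ∀ n : ℕ, a (n + 1) = ((r + n) / (n + 1)) * a n := fun n => genBinom_succ r n
  have hc0 : (0 : ℝ) < (1 - x) ^ r := Real.rpow_pos_of_pos (by linarith) r
  -- (i) positivity
  have hpos : ∀ i : ℕ, 0 < pi i := by
    intro i
    rw [hpi i]
    have h1 := hapos i
    simp only [ha_def] at h1
    positivity
  -- (iii) detailed balance
  have hdb : ∀ i : ℕ, pi i * (lam * (i : ℝ) + nu) = mu * ((i : ℝ) + 1) * pi (i + 1) := by
    intro i
    rw [hpi i, hpi (i + 1), genBinom_succ r i, pow_succ]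
    have hi1 : ((i : ℝ) + 1) ≠ 0 := by positivity
    have hlam' : lam ≠ 0 := hlam.ne'
    have hmu' : mu ≠ 0 := hmu.ne'
    have f1 : ((r + (i : ℝ)) / ((i : ℝ) + 1)) * ((i : ℝ) + 1) = r + i := div_mul_cancel₀ _ hi1
    have f2 : mu * x = lam := by rw [hxdef]; field_simp
    have f3 : lam * r = nu := by rw [hr]; field_simp
    set K := genBinom (r + (i : ℝ) - 1) i * x ^ i * (1 - x) ^ r with hK
    linear_combination (-(mu * x * K)) * f1 + (-(K * (r + (i : ℝ)))) * f2 + (-K) * f3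
  refine ⟨hpos, ?_, hdb⟩
  -- (ii) the sum
  set t : ℝ := (x + 1) / 2 with htdef
  have ht0 : 0 < t := by rw [htdef]; linarith
  have htx : x < t := by rw [htdef]; linarith
  have ht1 : t < 1 := by rw [htdef]; linarith
  have hratio : Filter.Tendsto (fun n : ℕ => a (n + 1) / a n) Filter.atTop (nhds 1) := by
    refine Filter.Tendsto.congr (fun n => ?_) (tendsto_aux r)
    rw [harec n]
    field_simp [(hapos n).ne']
  have hsa : Summable fun n => a n * t ^ n := summable_aux hapos hratio ht0 ht1
  set u : ℕ → ℝ := fun n => (((n : ℝ) + 1) * a n / t) * t ^ n with hu_def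
  have hu : Summable u := by
    refine summable_aux (a := fun n => ((n : ℝ) + 1) * a n / t) (fun n => ?_) ?_ ht0 ht1
    · have := hapos n; positivity
    · refine Filter.Tendsto.congr (fun n => ?_)
        (by simpa using (tendsto_aux 2).mul (tendsto_aux r))
      simp only [harec n]
      have h1 : a n ≠ 0 := (hapos n).ne'
      have h2 : ((n : ℝ) + 1) ≠ 0 := by positivity
      push_cast
      field_simp
      ring
  have hs_open : IsOpen (Set.Ioo (-t) t) := isOpen_Ioo
  have hs_conn : IsPreconnected (Set.Ioo (-t) t) := isPreconnected_Ioo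
  have h0s : (0 : ℝ) ∈ Set.Ioo (-t) t := ⟨by linarith, ht0⟩
  have hxs : x ∈ Set.Ioo (-t) t := ⟨by linarith, htx⟩
  have hderiv : ∀ (n : ℕ) (y : ℝ), y ∈ Set.Ioo (-t) t →
      HasDerivAt (fun z : ℝ => a n * z ^ n) (a n * ((n : ℝ) * y ^ (n - 1))) y :=
    fun n y _ => (hasDerivAt_pow n y).const_mul (a n)
  have hbound : ∀ (n : ℕ) (y : ℝ), y ∈ Set.Ioo (-t) t →
      ‖a n * ((n : ℝ) * y ^ (n - 1))‖ ≤ u n := by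
    intro n y hy
    have hyt : |y| ≤ t := le_of_lt (abs_lt.2 ⟨by linarith [hy.1], hy.2⟩)
    cases n with
    | zero =>
        have h0 := hapos 0
        simp only [Nat.cast_zero, zero_mul, mul_zero, norm_zero, hu_def]
        positivity
    | succ m =>
        have hu_eq : u (m + 1) = (((m : ℝ) + 2) * a (m + 1)) * t ^ m := by
          rw [hu_def]
          push_cast
          rw [pow_succ]
          field_simp
          ring
        rw [hu_eq, Real.norm_eq_abs, abs_mul, abs_of_pos (hapos (m + 1)), abs_mul, abs_pow,
          Nat.abs_cast]
        have hmm : (m + 1) - 1 = m := rfl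
        rw [hmm]
        have hpow : |y| ^ m ≤ t ^ m := pow_le_pow_left₀ (abs_nonneg y) hyt m
        have ham := hapos (m + 1)
        calc a (m + 1) * (((m + 1 : ℕ) : ℝ) * |y| ^ m)
            = (((m : ℝ) + 1) * a (m + 1)) * |y| ^ m := by push_cast; ring
          _ ≤ (((m : ℝ) + 2) * a (m + 1)) * t ^ m := by
              gcongr
              linarith
  have hg0 : Summable fun n => a n * (0 : ℝ) ^ n := by
    apply summable_of_ne_finset_zero (s := {0})
    intro n hn
    simp only [Finset.mem_singleton] at hn
    simp [zero_pow hn]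
  have hSd : ∀ y ∈ Set.Ioo (-t) t, HasDerivAt (fun z : ℝ => ∑' n, a n * z ^ n)
      (∑' n, a n * ((n : ℝ) * y ^ (n - 1))) y :=
    fun y hy => hasDerivAt_tsum_of_isPreconnected hu hs_open hs_conn hderiv hbound h0s hg0 hy
  have hkey : ∀ y ∈ Set.Ioo (-t) t,
      (1 - y) * (∑' n, a n * ((n : ℝ) * y ^ (n - 1))) = r * (∑' n, a n * y ^ n) := by
    intro y hy
    have hyt : |y| ≤ t := le_of_lt (abs_lt.2 ⟨by linarith [hy.1], hy.2⟩)
    have hsun : Summable fun n => a n * y ^ n := by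
      refine Summable.of_norm_bounded hsa fun n => ?_
      rw [Real.norm_eq_abs, abs_mul, abs_of_pos (hapos n), abs_pow]
      exact mul_le_mul_of_nonneg_left (pow_le_pow_left₀ (abs_nonneg y) hyt n) (hapos n).le
    have hsud : Summable fun n => a n * ((n : ℝ) * y ^ (n - 1)) :=
      Summable.of_norm_bounded hu fun n => hbound n y hy
    have H1 : HasSum (fun n => a n * ((n : ℝ) * y ^ (n - 1)))
        (∑' n, a n * ((n : ℝ) * y ^ (n - 1))) := hsud.hasSum
    have H2 : HasSum (fun n => a (n + 1) * (((n + 1 : ℕ) : ℝ) * y ^ ((n + 1) - 1)))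
        (∑' n, a n * ((n : ℝ) * y ^ (n - 1))) := by
      refine (hasSum_nat_add_iff (f := fun n => a n * ((n : ℝ) * y ^ (n - 1))) 1).mpr ?_
      simpa using H1
    have H3 : HasSum (fun n => r * (a n * y ^ n) + y * (a n * ((n : ℝ) * y ^ (n - 1))))
        (r * (∑' n, a n * y ^ n) + y * (∑' n, a n * ((n : ℝ) * y ^ (n - 1)))) :=
      (hsun.hasSum.mul_left r).add (H1.mul_left y)
    have heq : (fun n : ℕ => a (n + 1) * (((n + 1 : ℕ) : ℝ) * y ^ ((n + 1) - 1)))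
        = fun n : ℕ => r * (a n * y ^ n) + y * (a n * ((n : ℝ) * y ^ (n - 1))) := by
      funext n
      rw [harec n]
      cases n with
      | zero => push_cast; ring_nf
      | succ m =>
          have h2 : ((m : ℝ) + 1 + 1) ≠ 0 := by positivity
          have hmm : (m + 1) - 1 = m := rfl
          have hmm2 : (m + 1 + 1) - 1 = m + 1 := rfl
          rw [hmm, hmm2]
          push_cast
          rw [pow_succ]
          field_simp
    rw [heq] at H2
    have hDeq := H2.unique H3
    linear_combination hDeq
  have hF : ∀ y ∈ Set.Ioo (-t) t,
      HasDerivAt (fun z : ℝ => (∑' n, a n * z ^ n) * (1 - z) ^ r) 0 y := by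
    intro y hy
    have hy1 : 0 < 1 - y := by have := hy.2; linarith
    have h₁ : HasDerivAt (fun z : ℝ => 1 - z) (-1) y := by
      simpa using (hasDerivAt_id y).const_sub 1
    have hP : HasDerivAt (fun z : ℝ => (1 - z) ^ r) ((-1) * r * (1 - y) ^ (r - 1)) y :=
      h₁.rpow_const (Or.inl hy1.ne')
    have hmul := (hSd y hy).mul hP
    refine hmul.congr_deriv (Eq.symm ?_)
    have hpow : (1 - y) ^ r = (1 - y) ^ (r - 1) * (1 - y) := by
      rw [← Real.rpow_add_one hy1.ne' (r - 1)]
      norm_num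
    rw [hpow]
    linear_combination (-(1 - y) ^ (r - 1)) * (hkey y hy)
  have hconst : (∑' n, a n * x ^ n) * (1 - x) ^ r
      = (∑' n, a n * (0 : ℝ) ^ n) * ((1 : ℝ) - 0) ^ r := by
    have hdiff : DifferentiableOn ℝ (fun z : ℝ => (∑' n, a n * z ^ n) * (1 - z) ^ r)
        (Set.Ioo (-t) t) :=
      fun y hy => ((hF y hy).differentiableAt).differentiableWithinAt
    have h := (convex_Ioo (-t) t).is_const_of_fderivWithin_eq_zero hdiff
      (fun y hy => by
        rw [fderivWithin_of_isOpen hs_open hy, ((hF y hy).hasFDerivAt).fderiv]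
        ext z
        simp) hxs h0s
    simpa using h
  have hF0 : (∑' n, a n * (0 : ℝ) ^ n) * ((1 : ℝ) - 0) ^ r = 1 := by
    have h1 : (∑' n, a n * (0 : ℝ) ^ n) = 1 := by
      rw [tsum_eq_single 0 (fun n hn => by simp [zero_pow hn])]
      simp [ha_def, genBinom]
    rw [h1]
    norm_num
  have hsx : Summable fun n => a n * x ^ n := summable_aux hapos hratio hx0 hx1
  have h := hsx.hasSum.mul_right ((1 - x) ^ r)
  rw [hconst, hF0] at h
  refine h.congr_fun fun i => ?_
  rw [hpi i]
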